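/- With H and diagonal D as above and all D_l ≥ 0, the maximum absolute row sum of H D Hᵀ satisfies ‖H D Hᵀ‖_∞ ≤ max_{1≤i≤p} Σ_{l=0}^{p} D_{i+l} |θ_{p-l}| · Σ_{k=0}^{p} |θ_k|, and hence ‖H D Hᵀ‖₂ ≤ max_{1≤i≤p} Σ_{l=0}^{p} D_{i+l} |θ_{p-l}| · Σ_{k=0}^{p} |θ_k|. -/

import Mathlib

/-- The spectral norm (operator norm induced by the Euclidean norm) of a real matrix. -/
noncomputable def matrixSpectralNorm {p m : ℕ} (A : Matrix (Fin p) (Fin m) ℝ) : ℝ :=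
  ‖LinearMap.toContinuousLinearMap (Matrix.toEuclideanLin A)‖

/-- The spectral norm of a symmetric real matrix is bounded by any uniform bound on its
absolute row sums. -/
lemma spec_le_of_rowsum {n : ℕ} (M : Matrix (Fin n) (Fin n) ℝ) (hsym : M.transpose = M)
    (K : ℝ) (hK : 0 ≤ K) (hrow : ∀ i, ∑ j, |M i j| ≤ K) : matrixSpectralNorm M ≤ K := by
  rw [matrixSpectralNorm]
  apply ContinuousLinearMap.opNorm_le_bound _ hK
  intro x
  rw [LinearMap.coe_toContinuousLinearMap', Matrix.toEuclideanLin_apply]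
  set y : Fin n → ℝ := (WithLp.equiv 2 (Fin n → ℝ)) x with hy
  have hnx : ‖x‖ = Real.sqrt (∑ j, y j ^ 2) := by
    rw [EuclideanSpace.norm_eq]
    congr 1
    refine Finset.sum_congr rfl fun j _ => ?_
    rw [Real.norm_eq_abs, sq_abs]; rfl
  have hnMx : ‖(WithLp.equiv 2 (Fin n → ℝ)).symm (M.mulVec y)‖
      = Real.sqrt (∑ i, (M.mulVec y) i ^ 2) := by
    rw [EuclideanSpace.norm_eq]
    congr 1
    refine Finset.sum_congr rfl fun i _ => ?_
    rw [Real.norm_eq_abs, sq_abs]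
    rfl
  rw [show ‖WithLp.toLp 2 (M.mulVec x.ofLp)‖ = _ from hnMx, hnx, ← Real.sqrt_sq hK, ← Real.sqrt_mul (sq_nonneg K)]
  apply Real.sqrt_le_sqrt
  have key : ∀ i, (M.mulVec y) i ^ 2 ≤ (∑ j, |M i j|) * (∑ j, |M i j| * y j ^ 2) := by
    intro i
    have h1 : (M.mulVec y) i ^ 2 ≤ (∑ j, |M i j| * |y j|) ^ 2 := by
      rw [← sq_abs]
      apply pow_le_pow_left₀ (abs_nonneg _)
      calc |(M.mulVec y) i| = |∑ j, M i j * y j| := by rw [Matrix.mulVec]; rfl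
        _ ≤ ∑ j, |M i j * y j| := Finset.abs_sum_le_sum_abs _ _
        _ = ∑ j, |M i j| * |y j| := by simp [abs_mul]
    refine h1.trans ?_
    have h2 : (∑ j, |M i j| * |y j|) ^ 2
        = (∑ j, Real.sqrt (|M i j|) * (Real.sqrt (|M i j|) * |y j|)) ^ 2 := by
      congr 1
      refine Finset.sum_congr rfl fun j _ => ?_
      rw [← mul_assoc, Real.mul_self_sqrt (abs_nonneg _)]
    rw [h2]
    refine (Finset.sum_mul_sq_le_sq_mul_sq _ _ _).trans_eq ?_
    congr 1
    · refine Finset.sum_congr rfl fun j _ => ?_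
      rw [Real.sq_sqrt (abs_nonneg _)]
    · refine Finset.sum_congr rfl fun j _ => ?_
      rw [mul_pow, Real.sq_sqrt (abs_nonneg _), sq_abs]
  calc ∑ i, (M.mulVec y) i ^ 2 ≤ ∑ i, K * (∑ j, |M i j| * y j ^ 2) := by
        refine Finset.sum_le_sum fun i _ => (key i).trans ?_
        apply mul_le_mul_of_nonneg_right (hrow i)
        exact Finset.sum_nonneg fun j _ => mul_nonneg (abs_nonneg _) (sq_nonneg _)
    _ = K * ∑ j, (∑ i, |M i j|) * y j ^ 2 := by
        rw [← Finset.mul_sum, Finset.sum_comm]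
        congr 1
        exact Finset.sum_congr rfl fun j _ => (Finset.sum_mul _ _ _).symm
    _ ≤ K * ∑ j, K * y j ^ 2 := by
        apply mul_le_mul_of_nonneg_left _ hK
        refine Finset.sum_le_sum fun j _ => ?_
        apply mul_le_mul_of_nonneg_right _ (sq_nonneg _)
        calc ∑ i, |M i j| = ∑ i, |M j i| := by
              refine Finset.sum_congr rfl fun i _ => ?_
              conv_lhs => rw [← hsym]
              rfl
          _ ≤ K := hrow j
    _ = K ^ 2 * ∑ j, y j ^ 2 := by rw [← Finset.mul_sum]; ring

/-- With `H` the filter matrix and `D` diagonal with nonnegative entries, the maximum absolute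
row sum of `H D Hᵀ` is at most `max_i Σ_{l=0}^p D_{i+l} |θ_{p-l}| · Σ_{k=0}^p |θ_k|`, and hence
so is the spectral norm. -/
theorem filter_matrix_conj_diagonal_upper_bound
    (p : ℕ) (θ : Fin (p + 1) → ℝ) (d : Fin (2 * p) → ℝ) (hd : ∀ l, 0 ≤ d l)
    (H : Matrix (Fin p) (Fin (2 * p)) ℝ)
    (hH : ∀ (i : Fin p) (j : Fin (2 * p)),
      H i j = if (i : ℕ) ≤ (j : ℕ) ∧ (j : ℕ) ≤ (i : ℕ) + p then
          θ ⟨p - ((j : ℕ) - (i : ℕ)), Nat.lt_succ_of_le (Nat.sub_le p _)⟩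
        else 0) :
    (∀ i : Fin p, ∑ j : Fin p, |(H * Matrix.diagonal d * H.transpose) i j| ≤
        (⨆ i' : Fin p, ∑ l : Fin (p + 1),
            d ⟨(i' : ℕ) + (l : ℕ), by omega⟩ * |θ ⟨p - (l : ℕ), by omega⟩|) *
          ∑ k : Fin (p + 1), |θ k|) ∧
    matrixSpectralNorm (H * Matrix.diagonal d * H.transpose) ≤
      (⨆ i' : Fin p, ∑ l : Fin (p + 1),
          d ⟨(i' : ℕ) + (l : ℕ), by omega⟩ * |θ ⟨p - (l : ℕ), by omega⟩|) *
        ∑ k : Fin (p + 1), |θ k| := by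
  classical
  set M : Matrix (Fin p) (Fin p) ℝ := H * Matrix.diagonal d * H.transpose with hM
  have hT0 : (0:ℝ) ≤ ∑ k : Fin (p + 1), |θ k| :=
    Finset.sum_nonneg fun k _ => abs_nonneg _
  -- column sums of H are bounded by ∑ |θ k|
  have hcol : ∀ j' : Fin (2 * p), ∑ j : Fin p, |H j j'| ≤ ∑ k : Fin (p + 1), |θ k| := by
    intro j'
    calc ∑ j : Fin p, |H j j'|
        = ∑ j ∈ Finset.univ.filter
            (fun j : Fin p => (j : ℕ) ≤ (j' : ℕ) ∧ (j' : ℕ) ≤ (j : ℕ) + p),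
          |θ ⟨p - ((j' : ℕ) - (j : ℕ)), Nat.lt_succ_of_le (Nat.sub_le p _)⟩| := by
          rw [Finset.sum_filter]
          refine Finset.sum_congr rfl fun j _ => ?_
          rw [hH, apply_ite abs, abs_zero]
      _ = ∑ k ∈ Finset.image
            (fun j : Fin p => (⟨p - ((j' : ℕ) - (j : ℕ)),
              Nat.lt_succ_of_le (Nat.sub_le p _)⟩ : Fin (p + 1)))
            (Finset.univ.filter
              (fun j : Fin p => (j : ℕ) ≤ (j' : ℕ) ∧ (j' : ℕ) ≤ (j : ℕ) + p)),
          |θ k| := by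
          have hinj : ∀ a ∈ Finset.univ.filter
              (fun j : Fin p => (j : ℕ) ≤ (j' : ℕ) ∧ (j' : ℕ) ≤ (j : ℕ) + p),
              ∀ b ∈ Finset.univ.filter
              (fun j : Fin p => (j : ℕ) ≤ (j' : ℕ) ∧ (j' : ℕ) ≤ (j : ℕ) + p),
              (⟨p - ((j' : ℕ) - (a : ℕ)), Nat.lt_succ_of_le (Nat.sub_le p _)⟩ : Fin (p + 1)) =
                ⟨p - ((j' : ℕ) - (b : ℕ)), Nat.lt_succ_of_le (Nat.sub_le p _)⟩ → a = b := by
            intro a ha b hb hab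
            simp only [Finset.mem_filter] at ha hb
            have h := congrArg Fin.val hab
            simp only at h
            exact Fin.ext (by omega)
          exact (Finset.sum_image (f := fun k : Fin (p + 1) => |θ k|) hinj).symm
      _ ≤ ∑ k : Fin (p + 1), |θ k| :=
          Finset.sum_le_sum_of_subset_of_nonneg (Finset.subset_univ _)
            (fun k _ _ => abs_nonneg _)
  -- weighted row sums of H equal the claimed expression
  have hrowd : ∀ i : Fin p, ∑ j' : Fin (2 * p), |H i j'| * d j'
      = ∑ l : Fin (p + 1), d ⟨(i : ℕ) + (l : ℕ), by omega⟩ * |θ ⟨p - (l : ℕ), by omega⟩| := by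
    intro i
    refine (Finset.sum_of_injOn (fun l : Fin (p + 1) => (⟨(i : ℕ) + (l : ℕ), by omega⟩ : Fin (2 * p)))
      ?_ ?_ ?_ ?_).symm
    · intro a _ b _ hab
      have h := congrArg Fin.val hab
      simp only at h
      exact Fin.ext (by omega)
    · intro a _
      simp
    · intro j' _ hj'
      have hnot : ¬((i : ℕ) ≤ (j' : ℕ) ∧ (j' : ℕ) ≤ (i : ℕ) + p) := by
        rintro ⟨h1, h2⟩
        refine hj' ⟨⟨(j' : ℕ) - (i : ℕ), by omega⟩, by simp, ?_⟩
        exact Fin.ext (by simp; omega)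
      rw [hH, if_neg hnot, abs_zero, zero_mul]
    · intro l _
      rw [hH]
      rw [if_pos (by simp; omega)]
      have hidx : (⟨p - (((i : ℕ) + (l : ℕ)) - (i : ℕ)),
          Nat.lt_succ_of_le (Nat.sub_le p _)⟩ : Fin (p + 1)) = ⟨p - (l : ℕ), by omega⟩ :=
        Fin.ext (by simp)
      simp only [hidx]
      ring
  -- the main row sum bound
  have hrow : ∀ i : Fin p, ∑ j : Fin p, |M i j| ≤
      (⨆ i' : Fin p, ∑ l : Fin (p + 1),
          d ⟨(i' : ℕ) + (l : ℕ), by omega⟩ * |θ ⟨p - (l : ℕ), by omega⟩|) *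
        ∑ k : Fin (p + 1), |θ k| := by
    intro i
    calc ∑ j : Fin p, |M i j|
        ≤ ∑ j : Fin p, ∑ j' : Fin (2 * p), |H i j'| * d j' * |H j j'| := by
          refine Finset.sum_le_sum fun j _ => ?_
          have hMij : M i j = ∑ j' : Fin (2 * p), H i j' * d j' * H j j' := by
            rw [hM, Matrix.mul_apply]
            exact Finset.sum_congr rfl fun j' _ => by
              rw [Matrix.mul_diagonal, Matrix.transpose_apply]
          rw [hMij]
          refine (Finset.abs_sum_le_sum_abs _ _).trans ?_
          refine Finset.sum_le_sum fun j' _ => ?_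
          rw [abs_mul, abs_mul, abs_of_nonneg (hd j')]
      _ = ∑ j' : Fin (2 * p), (|H i j'| * d j') * ∑ j : Fin p, |H j j'| := by
          rw [Finset.sum_comm]
          exact Finset.sum_congr rfl fun j' _ => (Finset.mul_sum _ _ _).symm
      _ ≤ ∑ j' : Fin (2 * p), (|H i j'| * d j') * ∑ k : Fin (p + 1), |θ k| := by
          refine Finset.sum_le_sum fun j' _ => ?_
          exact mul_le_mul_of_nonneg_left (hcol j') (mul_nonneg (abs_nonneg _) (hd j'))
      _ = (∑ j' : Fin (2 * p), |H i j'| * d j') * ∑ k : Fin (p + 1), |θ k| :=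
          (Finset.sum_mul _ _ _).symm
      _ = (∑ l : Fin (p + 1),
            d ⟨(i : ℕ) + (l : ℕ), by omega⟩ * |θ ⟨p - (l : ℕ), by omega⟩|) *
          ∑ k : Fin (p + 1), |θ k| := by rw [hrowd i]
      _ ≤ _ := by
          refine mul_le_mul_of_nonneg_right ?_ hT0
          exact le_ciSup (f := fun i' : Fin p => ∑ l : Fin (p + 1),
              d ⟨(i' : ℕ) + (l : ℕ), by omega⟩ * |θ ⟨p - (l : ℕ), by omega⟩|)
            (Set.Finite.bddAbove (Set.finite_range _)) i
  refine ⟨hrow, ?_⟩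
  apply spec_le_of_rowsum
  · rw [hM, Matrix.transpose_mul, Matrix.transpose_mul, Matrix.transpose_transpose,
      Matrix.diagonal_transpose, Matrix.mul_assoc]
  · refine mul_nonneg (Real.iSup_nonneg fun i' => Finset.sum_nonneg fun l _ =>
      mul_nonneg (hd _) (abs_nonneg _)) hT0
  · exact hrow
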